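/- Let (R_{α,n}) be an A_r Q-system solution. For m ∈ {0,1,…,r+1} and n ∈ ℤ, let D_m(n) be the determinant of the (r+1)×(r+1) matrix whose rows are indexed by i = 1,…,r+1, whose columns are indexed by the elements j of {1,…,r+2}\{r+2−m} taken in increasing order, and whose (i,j) entry is R_{1, n+i+j−2}. Then: (a) for each m, D_m(n) is independent of n; (b) D_0(n) = D_{r+1}(n) = 1 for all n; and (c) for all n ∈ ℤ, Σ_{m=0}^{r+1} (−1)^m·D_{r+1−m}(0)·R_{1, n+m} = 0. -/

import Mathlib

open Matrix

def qsysHk (a : ℤ → ℝ) (k : ℕ) (n : ℤ) : Matrix (Fin k) (Fin k) ℝ :=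
  Matrix.of fun i j => a (n + (i : ℕ) + (j : ℕ))

lemma qsysHk_def (a : ℤ → ℝ) (k : ℕ) (n : ℤ) :
    qsysHk a k n = Matrix.of fun i j : Fin k => a (n + (i : ℕ) + (j : ℕ)) := rfl

/-- The equivalence putting the corner indices {0, k+1} first. -/
def qsysE (k : ℕ) : Fin 2 ⊕ Fin k ≃ Fin (k + 2) where
  toFun s := Sum.elim (fun p => if p = 0 then 0 else Fin.last (k + 1))
    (fun j => j.succ.castSucc) s
  invFun i := if h : (i : ℕ) = 0 then Sum.inl 0 else
    if h' : (i : ℕ) = k + 1 then Sum.inl 1 else Sum.inr ⟨(i : ℕ) - 1, by omega⟩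
  left_inv := by
    rintro (p | j)
    · fin_cases p <;> simp
    · have h1 : ((j.succ.castSucc : Fin (k + 2)) : ℕ) = (j : ℕ) + 1 := by simp
      have : (j : ℕ) + 1 ≠ 0 := by omega
      have h2 : (j : ℕ) + 1 ≠ k + 1 := by omega
      simp only [Sum.elim_inr, h1, this, h2, dite_false, dif_neg]
      congr 1
  right_inv := by
    intro i
    by_cases h : (i : ℕ) = 0
    · have : i = 0 := Fin.ext h
      subst this; simp
    · by_cases h' : (i : ℕ) = k + 1
      · have : i = Fin.last (k+1) := Fin.ext h'
        subst this; simp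
      · simp only [dif_neg h, dif_neg h', Sum.elim_inr]
        ext
        simp only [Fin.coe_castSucc, Fin.val_succ]
        omega

@[simp] lemma qsysE_inl0 (k : ℕ) : ((qsysE k) (Sum.inl 0) : ℕ) = 0 := rfl
@[simp] lemma qsysE_inl1 (k : ℕ) : ((qsysE k) (Sum.inl 1) : ℕ) = k + 1 := rfl
@[simp] lemma qsysE_inr (k : ℕ) (j : Fin k) : ((qsysE k) (Sum.inr j) : ℕ) = (j : ℕ) + 1 := by
  simp [qsysE]
def qsysE1 (k : ℕ) : Fin 1 ⊕ Fin k ≃ Fin (k + 1) where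
  toFun s := Sum.elim (fun _ => 0) (fun j => j.succ) s
  invFun i := if h : (i : ℕ) = 0 then Sum.inl 0 else Sum.inr ⟨(i : ℕ) - 1, by omega⟩
  left_inv := by
    rintro (p | j)
    · fin_cases p; simp
    · simp only [Sum.elim_inr, Fin.val_succ, Nat.add_one_ne_zero, dif_neg]
      congr 1
  right_inv := by
    intro i
    by_cases h : (i : ℕ) = 0
    · simp [h, Fin.ext_iff]
    · simp only [dif_neg h, Sum.elim_inr]
      ext; simp only [Fin.val_succ]; omega

def qsysE2 (k : ℕ) : Fin 1 ⊕ Fin k ≃ Fin (k + 1) where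
  toFun s := Sum.elim (fun _ => Fin.last k) (fun j => j.castSucc) s
  invFun i := if h : (i : ℕ) = k then Sum.inl 0 else Sum.inr ⟨(i : ℕ), by omega⟩
  left_inv := by
    rintro (p | j)
    · fin_cases p; simp
    · have : (j : ℕ) ≠ k := by omega
      simp only [Sum.elim_inr, Fin.coe_castSucc, this, dif_neg this]
      simp [this]
  right_inv := by
    intro i
    by_cases h : (i : ℕ) = k
    · simp [h, Fin.ext_iff]
    · simp only [dif_neg h, Sum.elim_inr]
      ext; simp

@[simp] lemma qsysE1_inl (k : ℕ) (p : Fin 1) : ((qsysE1 k) (Sum.inl p) : ℕ) = 0 := rfl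
@[simp] lemma qsysE1_inr (k : ℕ) (j : Fin k) : ((qsysE1 k) (Sum.inr j) : ℕ) = (j : ℕ) + 1 := rfl
@[simp] lemma qsysE2_inl (k : ℕ) (p : Fin 1) : ((qsysE2 k) (Sum.inl p) : ℕ) = k := rfl
@[simp] lemma qsysE2_inr (k : ℕ) (j : Fin k) : ((qsysE2 k) (Sum.inr j) : ℕ) = (j : ℕ) := rfl

@[simp] lemma qsysE_inl0' (k : ℕ) : ((qsysE k) (Sum.inl 0) : ℕ) = 0 := rfl
@[simp] lemma qsysE_inl1' (k : ℕ) : ((qsysE k) (Sum.inl 1) : ℕ) = k + 1 := rfl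
@[simp] lemma qsysE_inr' (k : ℕ) (j : Fin k) : ((qsysE k) (Sum.inr j) : ℕ) = (j : ℕ) + 1 := by
  simp [qsysE]

lemma qsys_dodgson (a : ℤ → ℝ) (k : ℕ) (n : ℤ) (h : IsUnit (qsysHk a k (n + 2)).det) :
    (qsysHk a (k + 2) n).det * (qsysHk a k (n + 2)).det =
      (qsysHk a (k + 1) n).det * (qsysHk a (k + 1) (n + 2)).det -
        (qsysHk a (k + 1) (n + 1)).det * (qsysHk a (k + 1) (n + 1)).det := by
  set Dm := qsysHk a k (n + 2) with hDm
  haveI : Invertible Dm := Dm.invertibleOfIsUnitDet h  -- maybe wrong name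
  set χ : Fin 2 → ℤ := fun p => if p = 0 then 0 else (k : ℤ) + 1 with hχ
  set A : Matrix (Fin 2) (Fin 2) ℝ := Matrix.of fun p q => a (n + χ p + χ q) with hA
  set B : Matrix (Fin 2) (Fin k) ℝ := Matrix.of fun p j => a (n + χ p + ((j : ℕ) + 1)) with hB
  set C : Matrix (Fin k) (Fin 2) ℝ := Matrix.of fun i q => a (n + ((i : ℕ) + 1) + χ q) with hC
  set S : Matrix (Fin 2) (Fin 2) ℝ := A - B * ⅟Dm * C with hS
  -- the big determinant
  have hbig : (qsysHk a (k + 2) n).det = Dm.det * S.det := by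
    have h1 : fromBlocks A B C Dm = (qsysHk a (k + 2) n).submatrix (qsysE k) (qsysE k) := by
      ext s t
      rcases s with p | i <;> rcases t with q | j
      · fin_cases p <;> fin_cases q <;>
          simp [qsysHk, hA, hχ, submatrix_apply, fromBlocks_apply₁₁] <;> (congr 1; push_cast; omega)
      · fin_cases p <;>
          simp [qsysHk, hB, hχ, submatrix_apply] <;> (congr 1; push_cast; omega)
      · fin_cases q <;>
          simp [qsysHk, hC, hχ, submatrix_apply] <;> (congr 1; push_cast; omega)
      · simp [qsysHk, hDm, submatrix_apply]
        congr 1; push_cast; omega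
    rw [← det_submatrix_equiv_self (qsysE k) (qsysHk a (k + 2) n), ← h1, det_fromBlocks₂₂]
  -- the four (k+1)-minors as bordered blocks
  set blk : Fin 2 → Fin 2 → Matrix (Fin 1 ⊕ Fin k) (Fin 1 ⊕ Fin k) ℝ := fun p q =>
    fromBlocks (Matrix.of fun _ _ => A p q) (Matrix.of fun _ j => B p j)
      (Matrix.of fun i _ => C i q) Dm with hblkdef
  have hblk : ∀ p q, (blk p q).det = Dm.det * S p q := by
    intro p q
    rw [hblkdef, det_fromBlocks₂₂]
    congr 1
    have : ((Matrix.of fun (_ : Fin 1) (_ : Fin 1) => A p q) -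
        (Matrix.of fun _ j => B p j) * ⅟Dm * (Matrix.of fun i _ => C i q)).det
        = A p q - ((Matrix.of fun (_ : Fin 1) (j : Fin k) => B p j) * ⅟Dm *
            (Matrix.of fun i (_ : Fin 1) => C i q)) 0 0 := by
      rw [det_fin_one]; rfl
    rw [this, hS]
    simp only [Matrix.sub_apply, of_apply]
    congr 1 <;> simp only [Matrix.mul_apply, of_apply]
  -- identify the four dets
  have h00 : (blk 0 0).det = (qsysHk a (k + 1) n).det := by
    rw [← det_submatrix_equiv_self (qsysE1 k) (qsysHk a (k + 1) n)]
    congr 1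
    ext s t
    rcases s with p | i <;> rcases t with q | j <;>
      · simp only [hblkdef, fromBlocks_apply₁₁, fromBlocks_apply₁₂, fromBlocks_apply₂₁,
          fromBlocks_apply₂₂, of_apply, submatrix_apply, qsysHk, hA, hB, hC, hDm, hχ]
        congr 1 <;> (simp only [if_true, qsysE1_inl, qsysE1_inr]; omega)
  have h11 : (blk 1 1).det = (qsysHk a (k + 1) (n + 2)).det := by
    rw [← det_submatrix_equiv_self (qsysE2 k) (qsysHk a (k + 1) (n + 2))]
    congr 1
    ext s t
    rcases s with p | i <;> rcases t with q | j <;>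
      · simp only [hblkdef, fromBlocks_apply₁₁, fromBlocks_apply₁₂, fromBlocks_apply₂₁,
          fromBlocks_apply₂₂, of_apply, submatrix_apply, qsysHk, hA, hB, hC, hDm, hχ]
        congr 1 <;>
          ((simp [qsysE1_inl, qsysE1_inr, qsysE2_inl, qsysE2_inr]) <;> omega)
  have h01 : (blk 0 1).det =
      ((qsysHk a (k + 1) (n + 1)).submatrix (qsysE1 k) (qsysE2 k)).det := by
    congr 1
    ext s t
    rcases s with p | i <;> rcases t with q | j <;>
      · simp only [hblkdef, fromBlocks_apply₁₁, fromBlocks_apply₁₂, fromBlocks_apply₂₁,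
          fromBlocks_apply₂₂, of_apply, submatrix_apply, qsysHk, hA, hB, hC, hDm, hχ]
        congr 1 <;>
          ((simp [qsysE1_inl, qsysE1_inr, qsysE2_inl, qsysE2_inr]) <;> omega)
  have h10 : (blk 1 0).det =
      ((qsysHk a (k + 1) (n + 1)).submatrix (qsysE2 k) (qsysE1 k)).det := by
    congr 1
    ext s t
    rcases s with p | i <;> rcases t with q | j <;>
      · simp only [hblkdef, fromBlocks_apply₁₁, fromBlocks_apply₁₂, fromBlocks_apply₂₁,
          fromBlocks_apply₂₂, of_apply, submatrix_apply, qsysHk, hA, hB, hC, hDm, hχ]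
        congr 1 <;>
          ((simp [qsysE1_inl, qsysE1_inr, qsysE2_inl, qsysE2_inr]) <;> omega)
  -- signs for the mixed minors
  set τ : Equiv.Perm (Fin 1 ⊕ Fin k) := (qsysE2 k).trans (qsysE1 k).symm with hτ
  set N := qsysHk a (k + 1) (n + 1) with hN
  have hcol : (N.submatrix (qsysE1 k) (qsysE2 k)).det
      = (Equiv.Perm.sign τ : ℝ) * N.det := by
    have : N.submatrix (qsysE1 k) (qsysE2 k) = (N.submatrix (qsysE1 k) (qsysE1 k)).submatrix id τ := by
      ext i j
      simp [hτ, submatrix_apply]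
    rw [this, det_permute', det_submatrix_equiv_self]
  have hrow : (N.submatrix (qsysE2 k) (qsysE1 k)).det
      = (Equiv.Perm.sign τ : ℝ) * N.det := by
    have : N.submatrix (qsysE2 k) (qsysE1 k) = (N.submatrix (qsysE1 k) (qsysE1 k)).submatrix τ id := by
      ext i j
      simp [hτ, submatrix_apply]
    rw [this, det_permute, det_submatrix_equiv_self]
  have hss : ((Equiv.Perm.sign τ : ℤ) : ℝ) * ((Equiv.Perm.sign τ : ℤ) : ℝ) = 1 := by
    rw [← Int.cast_mul, ← Units.val_mul, Int.units_mul_self]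
    norm_num
  have e00 : Dm.det * S 0 0 = (qsysHk a (k + 1) n).det := (hblk 0 0).symm.trans h00
  have e11 : Dm.det * S 1 1 = (qsysHk a (k + 1) (n + 2)).det := (hblk 1 1).symm.trans h11
  have e01 : Dm.det * S 0 1 = (Equiv.Perm.sign τ : ℝ) * N.det :=
    (hblk 0 1).symm.trans (h01.trans hcol)
  have e10 : Dm.det * S 1 0 = (Equiv.Perm.sign τ : ℝ) * N.det :=
    (hblk 1 0).symm.trans (h10.trans hrow)
  calc (qsysHk a (k + 2) n).det * Dm.det = (Dm.det * S.det) * Dm.det := by rw [hbig]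
    _ = (Dm.det * S 0 0) * (Dm.det * S 1 1) - (Dm.det * S 0 1) * (Dm.det * S 1 0) := by
        rw [det_fin_two]; ring
    _ = (qsysHk a (k + 1) n).det * (qsysHk a (k + 1) (n + 2)).det -
        (((Equiv.Perm.sign τ : ℤ) : ℝ) * ((Equiv.Perm.sign τ : ℤ) : ℝ)) * (N.det * N.det) := by
        rw [e00, e11, e01, e10]; ring
    _ = _ := by rw [hss, hN]; ring



lemma qsys_det_eq (r : ℕ) (R : ℕ → ℤ → ℝ)
    (hpos : ∀ α, α ≤ r + 1 → ∀ n : ℤ, 0 < R α n)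
    (hbd0 : ∀ n : ℤ, R 0 n = 1)
    (hQ : ∀ α, 1 ≤ α → α ≤ r → ∀ n : ℤ,
      R α (n + 1) * R α (n - 1) = R α n ^ 2 + R (α + 1) n * R (α - 1) n) :
    ∀ α, α ≤ r + 1 → ∀ n : ℤ, (qsysHk (R 1) α n).det = R α (n + (α : ℤ) - 1) := by
  intro α
  induction α using Nat.strong_induction_on with
  | _ α IH =>
    rcases α with (_ | (_ | k))
    · intro _ n
      rw [qsysHk_def]
      simp [Matrix.det_fin_zero, hbd0]
    · intro _ n
      rw [qsysHk_def]
      rw [show (Matrix.of fun i j : Fin 1 => R 1 (n + (i : ℕ) + (j : ℕ))).det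
          = R 1 (n + 0 + 0) from Matrix.det_fin_one _]
      norm_num
    · intro hle n
      have hk1 : k + 1 ≤ r + 1 := by omega
      have hk : k ≤ r + 1 := by omega
      have hDk : (qsysHk (R 1) k (n + 2)).det = R k (n + (k : ℤ) + 1) := by
        rw [IH k (by omega) hk (n + 2)]; congr 1; ring
      have hpk : 0 < R k (n + (k : ℤ) + 1) := hpos k hk _
      have hunit : IsUnit (qsysHk (R 1) k (n + 2)).det := by
        rw [hDk]; exact (ne_of_gt hpk).isUnit
      have hdj := qsys_dodgson (R 1) k n hunit
      have h0 : (qsysHk (R 1) (k + 1) n).det = R (k + 1) (n + (k : ℤ)) := by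
        rw [IH (k + 1) (by omega) hk1 n]; congr 1; push_cast; ring
      have h2 : (qsysHk (R 1) (k + 1) (n + 2)).det = R (k + 1) (n + (k : ℤ) + 2) := by
        rw [IH (k + 1) (by omega) hk1 (n + 2)]; congr 1; push_cast; ring
      have h1 : (qsysHk (R 1) (k + 1) (n + 1)).det = R (k + 1) (n + (k : ℤ) + 1) := by
        rw [IH (k + 1) (by omega) hk1 (n + 1)]; congr 1; push_cast; ring
      have hg := hQ (k + 1) (by omega) (by omega) (n + (k : ℤ) + 1)
      rw [show n + (k : ℤ) + 1 + 1 = n + (k : ℤ) + 2 from by ring,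
        show n + (k : ℤ) + 1 - 1 = n + (k : ℤ) from by ring] at hg
      simp only [Nat.add_sub_cancel] at hg
      have key : (qsysHk (R 1) (k + 2) n).det * R k (n + (k : ℤ) + 1)
          = R (k + 2) (n + (k : ℤ) + 1) * R k (n + (k : ℤ) + 1) := by
        rw [hDk, h0, h1, h2] at hdj
        rw [hdj]
        linear_combination hg
      have := mul_right_cancel₀ (ne_of_gt hpk) key
      rw [this]
      congr 1
      push_cast
      ring

def qsysRot (k : ℕ) : Equiv.Perm (Fin (k + 1)) :=
  (qsysE2 k).symm.trans (qsysE1 k)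

lemma qsysRot_val (k : ℕ) (i : Fin (k + 1)) :
    ((qsysRot k i : Fin (k + 1)) : ℕ) = if (i : ℕ) = k then 0 else (i : ℕ) + 1 := by
  by_cases h : (i : ℕ) = k <;>
    simp [qsysRot, qsysE2, qsysE1, h]

lemma qsys_det_updateRow_sum {p : ℕ} (A : Matrix (Fin p) (Fin p) ℝ) (j : Fin p)
    {ι : Type*} (s : Finset ι) (c : ι → ℝ) (v : ι → Fin p → ℝ) :
    (A.updateRow j (∑ k ∈ s, c k • v k)).det = ∑ k ∈ s, c k * (A.updateRow j (v k)).det := by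
  classical
  induction s using Finset.induction_on with
  | empty =>
      simp only [Finset.sum_empty]
      apply Matrix.det_eq_zero_of_row_eq_zero j
      intro jj
      simp
  | insert _ _ hk ih =>
      rw [Finset.sum_insert hk, Matrix.det_updateRow_add, Matrix.det_updateRow_smul,
        Finset.sum_insert hk, ih]

lemma qsys_step_det {p : ℕ} (M N : Matrix (Fin (p + 1)) (Fin (p + 1)) ℝ) (e : Fin (p + 1) → ℝ)
    (hshift : ∀ (i : Fin p) (c : Fin (p + 1)), M i.castSucc c = N i.succ c)
    (hlast : ∀ c, M (Fin.last p) c = ∑ i : Fin (p + 1), e i * N i c) :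
    M.det = ((Equiv.Perm.sign (qsysRot p) : ℤ) : ℝ) * (e 0 * N.det) := by
  have h1 : M = M.updateRow (Fin.last p) (∑ i : Fin (p + 1), e i • N i) := by
    ext pp c
    rw [Matrix.updateRow_apply]
    split_ifs with hp
    · rw [hp, hlast c]; simp [Finset.sum_apply]
    · rfl
  rw [h1, qsys_det_updateRow_sum M (Fin.last p) Finset.univ e (fun i => N i),
    Fin.sum_univ_succ]
  have hz : ∀ i : Fin p, (M.updateRow (Fin.last p) (N i.succ)).det = 0 := by
    intro i
    apply Matrix.det_zero_of_row_eq (i := i.castSucc) (j := Fin.last p)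
      (Fin.castSucc_lt_last i).ne
    funext c
    rw [Matrix.updateRow_apply, Matrix.updateRow_apply,
      if_neg (Fin.castSucc_lt_last i).ne, if_pos rfl]
    exact hshift i c
  have hzero : ∑ i : Fin p, e i.succ * (M.updateRow (Fin.last p) (N i.succ)).det = 0 :=
    Finset.sum_eq_zero (fun i _ => by rw [hz i]; ring)
  rw [hzero, add_zero]
  have hperm : M.updateRow (Fin.last p) (N 0) = N.submatrix (qsysRot p) id := by
    ext pp c
    rw [Matrix.submatrix_apply, Matrix.updateRow_apply]
    simp only [id_eq]
    split_ifs with hp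
    · rw [hp]
      congr 1
      ext
      rw [qsysRot_val]
      simp [Fin.val_last]
    · have hlt : (pp : ℕ) < p := by
        rcases Nat.lt_succ_iff_lt_or_eq.mp pp.isLt with h | h
        · exact h
        · exact absurd (Fin.ext h : pp = Fin.last p) hp
      have hrot : qsysRot p pp = Fin.succ ⟨(pp : ℕ), hlt⟩ := by
        ext
        rw [qsysRot_val]
        simp [Nat.ne_of_lt hlt]
      rw [hrot, ← hshift ⟨(pp : ℕ), hlt⟩ c]
      congr 1
  rw [hperm, Matrix.det_permute]
  push_cast
  ring

/-- the conserved quantities D_m(n) of the A_r Q-system.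
D_m(n) is the determinant of the (r+1)×(r+1) matrix with rows i = 1,…,r+1,
columns the elements j of {1,…,r+2}\{r+2−m} in increasing order (the c-th
column, 1 ≤ c ≤ r+1, is j = c if c < r+2−m and j = c+1 otherwise), and
(i,j) entry R_{1, n+i+j−2}.  Then D_m(n) is independent of n,
D_0 = D_{r+1} = 1, and Σ_{m=0}^{r+1} (−1)^m D_{r+1−m}(0) R_{1,n+m} = 0. -/
theorem qsystem_conserved_quantities (r : ℕ) (hr : 1 ≤ r) (R : ℕ → ℤ → ℝ)
    (hpos : ∀ α, α ≤ r + 1 → ∀ n : ℤ, 0 < R α n)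
    (hbd0 : ∀ n : ℤ, R 0 n = 1) (hbd1 : ∀ n : ℤ, R (r + 1) n = 1)
    (hQ : ∀ α, 1 ≤ α → α ≤ r → ∀ n : ℤ,
      R α (n + 1) * R α (n - 1) = R α n ^ 2 + R (α + 1) n * R (α - 1) n)
    (D : ℕ → ℤ → ℝ)
    (hD : ∀ (m : ℕ) (n : ℤ), D m n = Matrix.det (Matrix.of fun i c : Fin (r + 1) =>
      R 1 (n + (((i : ℕ) + 1 : ℕ) : ℤ) +
        (if (c : ℕ) + 1 < r + 2 - m then (((c : ℕ) + 1 : ℕ) : ℤ)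
          else (((c : ℕ) + 2 : ℕ) : ℤ)) - 2))) :
    (∀ m, m ≤ r + 1 → ∀ n n' : ℤ, D m n = D m n') ∧
    (∀ n : ℤ, D 0 n = 1) ∧ (∀ n : ℤ, D (r + 1) n = 1) ∧
    (∀ n : ℤ, ∑ m ∈ Finset.range (r + 2),
      (-1 : ℝ) ^ m * D (r + 1 - m) 0 * R 1 (n + (m : ℤ)) = 0) := by
  classical
  have hdet := qsys_det_eq r R hpos hbd0 hQ
  set a : ℤ → ℝ := R 1 with ha
  -- the comparison matrices
  set G : ℕ → ℤ → Matrix (Fin (r + 1)) (Fin (r + 1)) ℝ := fun m n => Matrix.of fun i c =>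
    a (n + ((i : ℕ) : ℤ) + (((if (c : ℕ) + 1 < r + 2 - m then (c : ℕ) else (c : ℕ) + 1 : ℕ)) : ℤ))
    with hGdef
  have hDG : ∀ (m : ℕ) (n : ℤ), D m n = (G m n).det := by
    intro m n
    rw [hD, hGdef]
    congr 1
    ext i c
    simp only [Matrix.of_apply]
    by_cases h : (c : ℕ) + 1 < r + 2 - m
    · rw [if_pos h, if_pos h]; congr 1; push_cast; ring
    · rw [if_neg h, if_neg h]; congr 1; push_cast; ring
  -- determinant of the full Hankel matrices is 1
  have hH1 : ∀ n : ℤ, (qsysHk a (r + 1) n).det = 1 := by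
    intro n
    rw [hdet (r + 1) le_rfl n]
    exact hbd1 _
  have hG0 : ∀ n : ℤ, G 0 n = qsysHk a (r + 1) n := by
    intro n
    rw [hGdef]
    ext i c
    simp only [Matrix.of_apply, qsysHk]
    rw [if_pos (by omega : (c : ℕ) + 1 < r + 2 - 0)]
  have hGr1 : ∀ n : ℤ, G (r + 1) n = qsysHk a (r + 1) (n + 1) := by
    intro n
    rw [hGdef]
    ext i c
    simp only [Matrix.of_apply, qsysHk]
    rw [if_neg (by omega : ¬ ((c : ℕ) + 1 < r + 2 - (r + 1)))]
    congr 1; push_cast; ring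
  have hD0 : ∀ n : ℤ, D 0 n = 1 := by
    intro n; rw [hDG, hG0, hH1]
  have hDr1 : ∀ n : ℤ, D (r + 1) n = 1 := by
    intro n; rw [hDG, hGr1, hH1]
  -- the (r+2) × (r+2) Hankel determinant vanishes
  have hbig0 : ∀ n : ℤ, (qsysHk a (r + 2) n).det = 0 := by
    intro n
    have hrd : (qsysHk a r (n + 2)).det = R r (n + 2 + (r : ℤ) - 1) := hdet r (by omega) (n + 2)
    have hrpos : (0 : ℝ) < (qsysHk a r (n + 2)).det := by
      rw [hrd]; exact hpos r (by omega) _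
    have hdj := qsys_dodgson a r n (ne_of_gt hrpos).isUnit
    rw [hH1 n, hH1 (n + 2), hH1 (n + 1)] at hdj
    norm_num at hdj
    rcases hdj with h | h
    · exact h
    · exact absurd h (ne_of_gt hrpos)
  -- extraction of linear recurrences
  have hup : ∀ n : ℤ, ∃ e : Fin (r + 1) → ℝ, ∀ j : ℕ, j ≤ r + 1 →
      a (n + (r : ℤ) + 1 + (j : ℤ)) = ∑ i : Fin (r + 1), e i * a (n + ((i : ℕ) : ℤ) + (j : ℤ)) := by
    intro n
    obtain ⟨c, hc0, hcv⟩ := Matrix.exists_vecMul_eq_zero_iff.mpr (hbig0 n)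
    have hpt : ∀ j : Fin (r + 2), ∑ i : Fin (r + 2), c i * a (n + ((i : ℕ) : ℤ) + ((j : ℕ) : ℤ)) = 0 := by
      intro j
      have := congrFun hcv j
      simpa [Matrix.vecMul, dotProduct, qsysHk] using this
    have hlast : c (Fin.last (r + 1)) ≠ 0 := by
      intro h0
      have hrow : ∀ j : Fin (r + 1),
          ∑ i : Fin (r + 1), c i.castSucc * a (n + ((i : ℕ) : ℤ) + ((j : ℕ) : ℤ)) = 0 := by
        intro j
        have h1 := hpt j.castSucc
        rw [Fin.sum_univ_castSucc] at h1
        simpa [h0, Fin.coe_castSucc] using h1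
      have hvm : (fun i => c (Fin.castSucc i)) ᵥ* qsysHk a (r + 1) n = 0 := by
        funext j
        have := hrow j
        simpa [Matrix.vecMul, dotProduct, qsysHk] using this
      have hzz : (fun i => c (Fin.castSucc i)) = 0 := by
        have hu : IsUnit (qsysHk a (r + 1) n).det := by rw [hH1]; exact isUnit_one
        have h2 := congrArg (fun v => v ᵥ* (qsysHk a (r + 1) n)⁻¹) hvm
        simpa [Matrix.vecMul_vecMul, Matrix.mul_nonsing_inv _ hu, Matrix.zero_vecMul,
          Matrix.vecMul_one] using h2
      apply hc0
      funext i
      induction i using Fin.lastCases with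
      | last => exact h0
      | cast i => exact congrFun hzz i
    refine ⟨fun i => -(c i.castSucc) / c (Fin.last (r + 1)), ?_⟩
    intro j hj
    have h1 := hpt ⟨j, by omega⟩
    rw [Fin.sum_univ_castSucc] at h1
    have hsum : ∑ i : Fin (r + 1),
        (-(c i.castSucc) / c (Fin.last (r + 1))) * a (n + ((i : ℕ) : ℤ) + (j : ℤ))
        = (-(1 / c (Fin.last (r + 1)))) *
          ∑ i : Fin (r + 1), c i.castSucc * a (n + ((i : ℕ) : ℤ) + (j : ℤ)) := by
      rw [Finset.mul_sum]
      exact Finset.sum_congr rfl (fun i _ => by ring)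
    have h2 : ∑ i : Fin (r + 1), c i.castSucc * a (n + ((i : ℕ) : ℤ) + (j : ℤ))
        = -(c (Fin.last (r + 1)) * a (n + (r : ℤ) + 1 + (j : ℤ))) := by
      have harg : ∀ i : Fin (r + 2), (n + ((i : ℕ) : ℤ) + (((⟨j, by omega⟩ : Fin (r + 2)) : ℕ) : ℤ))
          = n + ((i : ℕ) : ℤ) + (j : ℤ) := by intro i; norm_num
      rw [show (((Fin.last (r + 1) : Fin (r + 2)) : ℕ) : ℤ) = ((r : ℤ) + 1) from by simp] at h1
      have : ∑ i : Fin (r + 1), c i.castSucc *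
          a (n + (((i.castSucc : Fin (r + 2)) : ℕ) : ℤ) + (((⟨j, by omega⟩ : Fin (r + 2)) : ℕ) : ℤ))
          = ∑ i : Fin (r + 1), c i.castSucc * a (n + ((i : ℕ) : ℤ) + (j : ℤ)) := by
        refine Finset.sum_congr rfl (fun i _ => by congr 1 <;> simp [Fin.coe_castSucc])
      rw [this] at h1
      have harg2 : n + ((r : ℤ) + 1) + (((⟨j, by omega⟩ : Fin (r + 2)) : ℕ) : ℤ)
          = n + (r : ℤ) + 1 + (j : ℤ) := by norm_num; ring
      rw [harg2] at h1
      linarith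
    rw [hsum, h2]
    field_simp
  
  have hdown : ∀ n : ℤ, ∃ f : Fin (r + 1) → ℝ, ∀ j : ℕ, j ≤ r + 1 →
      a (n + (j : ℤ)) = ∑ i : Fin (r + 1), f i * a (n + 1 + ((i : ℕ) : ℤ) + (j : ℤ)) := by
    intro n
    obtain ⟨c, hc0, hcv⟩ := Matrix.exists_vecMul_eq_zero_iff.mpr (hbig0 n)
    have hpt : ∀ j : Fin (r + 2), ∑ i : Fin (r + 2), c i * a (n + ((i : ℕ) : ℤ) + ((j : ℕ) : ℤ)) = 0 := by
      intro j
      have := congrFun hcv j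
      simpa [Matrix.vecMul, dotProduct, qsysHk] using this
    have hfirst : c 0 ≠ 0 := by
      intro h0
      have hrow : ∀ j : Fin (r + 1),
          ∑ i : Fin (r + 1), c i.succ * a (n + 2 + ((i : ℕ) : ℤ) + ((j : ℕ) : ℤ)) = 0 := by
        intro j
        have h1 := hpt j.succ
        rw [Fin.sum_univ_succ] at h1
        rw [h0] at h1
        simp only [zero_mul, zero_add] at h1
        rw [← h1]
        refine Finset.sum_congr rfl (fun i _ => ?_)
        congr 1
        simp only [Fin.val_succ]
        push_cast
        ring
      have hvm : (fun i => c (Fin.succ i)) ᵥ* qsysHk a (r + 1) (n + 2) = 0 := by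
        funext j
        have := hrow j
        simpa [Matrix.vecMul, dotProduct, qsysHk] using this
      have hzz : (fun i => c (Fin.succ i)) = 0 := by
        have hu : IsUnit (qsysHk a (r + 1) (n + 2)).det := by rw [hH1]; exact isUnit_one
        have h2 := congrArg (fun v => v ᵥ* (qsysHk a (r + 1) (n + 2))⁻¹) hvm
        simpa [Matrix.vecMul_vecMul, Matrix.mul_nonsing_inv _ hu, Matrix.zero_vecMul,
          Matrix.vecMul_one] using h2
      apply hc0
      funext i
      induction i using Fin.cases with
      | zero => exact h0
      | succ i => exact congrFun hzz i
    refine ⟨fun i => -(c i.succ) / c 0, ?_⟩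
    intro j hj
    have h1 := hpt ⟨j, by omega⟩
    rw [Fin.sum_univ_succ] at h1
    have hsum : ∑ i : Fin (r + 1),
        (-(c i.succ) / c 0) * a (n + 1 + ((i : ℕ) : ℤ) + (j : ℤ))
        = (-(1 / c 0)) * ∑ i : Fin (r + 1), c i.succ * a (n + 1 + ((i : ℕ) : ℤ) + (j : ℤ)) := by
      rw [Finset.mul_sum]
      exact Finset.sum_congr rfl (fun i _ => by ring)
    have h2 : ∑ i : Fin (r + 1), c i.succ * a (n + 1 + ((i : ℕ) : ℤ) + (j : ℤ))
        = -(c 0 * a (n + (j : ℤ))) := by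
      have hre : ∑ i : Fin (r + 1), c i.succ *
          a (n + (((i.succ : Fin (r + 2)) : ℕ) : ℤ) + (((⟨j, by omega⟩ : Fin (r + 2)) : ℕ) : ℤ))
          = ∑ i : Fin (r + 1), c i.succ * a (n + 1 + ((i : ℕ) : ℤ) + (j : ℤ)) := by
        refine Finset.sum_congr rfl (fun i _ => ?_)
        congr 1
        simp only [Fin.val_succ]
        push_cast
        ring
      rw [hre] at h1
      have harg : n + (((0 : Fin (r + 2)) : ℕ) : ℤ) + (((⟨j, by omega⟩ : Fin (r + 2)) : ℕ) : ℤ)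
          = n + (j : ℤ) := by norm_num
      rw [harg] at h1
      linarith
    rw [hsum, h2]
    field_simp
  -- one-step constancy of all the D m
  have hstep : ∀ n : ℤ, ∀ m : ℕ, D m (n + 1) = D m n := by
    intro n
    obtain ⟨e, he⟩ := hup n
    have hmain : ∀ m : ℕ, D m (n + 1) =
        ((Equiv.Perm.sign (qsysRot r) : ℤ) : ℝ) * (e 0 * D m n) := by
      intro m
      rw [hDG m (n + 1), hDG m n]
      apply qsys_step_det
      · intro i c
        rw [hGdef]
        simp only [Matrix.of_apply]
        congr 1
        generalize (if (c : ℕ) + 1 < r + 2 - m then (c : ℕ) else (c : ℕ) + 1) = K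
        simp only [Fin.coe_castSucc, Fin.val_succ]
        push_cast
        ring
      · intro c
        rw [hGdef]
        simp only [Matrix.of_apply]
        have hKle : (if (c : ℕ) + 1 < r + 2 - m then (c : ℕ) else (c : ℕ) + 1) ≤ r + 1 := by
          have := c.isLt
          split_ifs <;> omega
        have hh := he (if (c : ℕ) + 1 < r + 2 - m then (c : ℕ) else (c : ℕ) + 1) hKle
        rw [← hh]
        congr 1
        generalize (if (c : ℕ) + 1 < r + 2 - m then (c : ℕ) else (c : ℕ) + 1) = K
        simp only [Fin.val_last]
        push_cast
        ring
    have h0' := hmain 0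
    rw [hD0, hD0] at h0'
    have hse : ((Equiv.Perm.sign (qsysRot r) : ℤ) : ℝ) * e 0 = 1 := by linarith [h0']
    intro m
    rw [hmain m, ← mul_assoc, hse, one_mul]
  have hconst : ∀ (m : ℕ) (n : ℤ), D m n = D m 0 := by
    intro m n
    induction n using Int.induction_on with
    | zero => rfl
    | succ k ih => rw [hstep (k : ℤ) m]; exact ih
    | pred k ih =>
        have h3 := hstep (-(k : ℤ) - 1) m
        rw [show (-(k : ℤ) - 1 + 1) = -(k : ℤ) from by ring] at h3
        rw [← h3]; exact ih
  
  -- part (c)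
  set w : ℤ → ℝ := fun N => ∑ j : Fin (r + 2),
    (-1 : ℝ) ^ (j : ℕ) * D (r + 1 - (j : ℕ)) 0 * a (N + ((j : ℕ) : ℤ)) with hwdef
  set E : ℤ → Matrix (Fin (r + 2)) (Fin (r + 2)) ℝ := fun N => Matrix.of fun i j =>
    if i = 0 then a (N + ((j : ℕ) : ℤ)) else a (((((i : ℕ) - 1 : ℕ)) : ℤ) + ((j : ℕ) : ℤ))
    with hEdef
  have hsa : ∀ (j : Fin (r + 2)) (c : Fin (r + 1)),
      ((j.succAbove c) : ℕ) = if (c : ℕ) < (j : ℕ) then (c : ℕ) else (c : ℕ) + 1 := by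
    intro j c
    by_cases hc : (c : ℕ) < (j : ℕ)
    · rw [Fin.succAbove_of_castSucc_lt j c (by rw [Fin.lt_def]; simpa using hc), if_pos hc]
      simp
    · rw [Fin.succAbove_of_le_castSucc j c (by rw [Fin.le_def]; simpa using not_lt.mp hc),
        if_neg hc]
      simp
  have hwE : ∀ N : ℤ, w N = (E N).det := by
    intro N
    rw [Matrix.det_succ_row_zero]
    simp only [hwdef]
    refine Finset.sum_congr rfl (fun j _ => ?_)
    have hminor : ((E N).submatrix Fin.succ j.succAbove).det = D (r + 1 - (j : ℕ)) 0 := by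
      rw [hDG (r + 1 - (j : ℕ)) 0]
      congr 1
      ext i c
      simp only [Matrix.submatrix_apply, hEdef, hGdef, Matrix.of_apply]
      rw [if_neg (Fin.succ_ne_zero i)]
      congr 1
      rw [hsa j c]
      have hj2 : (j : ℕ) ≤ r + 1 := by have := j.isLt; omega
      by_cases hc : (c : ℕ) < (j : ℕ)
      · rw [if_pos hc, if_pos (by omega : (c : ℕ) + 1 < r + 2 - (r + 1 - (j : ℕ)))]
        simp only [Fin.val_succ]
        omega
      · rw [if_neg hc, if_neg (by omega : ¬ ((c : ℕ) + 1 < r + 2 - (r + 1 - (j : ℕ))))]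
        simp only [Fin.val_succ]
        omega
    rw [hminor]
    have hE0 : E N 0 j = a (N + ((j : ℕ) : ℤ)) := by
      simp [hEdef]
    rw [hE0]
    ring
  have hw0 : ∀ t : ℕ, t ≤ r → w (t : ℤ) = 0 := by
    intro t ht
    rw [hwE]
    apply Matrix.det_zero_of_row_eq (i := (0 : Fin (r + 2))) (j := ⟨t + 1, by omega⟩)
    · exact Fin.ne_of_val_ne (by simp)
    · funext j
      simp only [hEdef, Matrix.of_apply, if_pos rfl]
      rw [if_neg (Fin.ne_of_val_ne (by simp : ((⟨t + 1, by omega⟩ : Fin (r + 2)) : ℕ) ≠ ((0 : Fin (r + 2)) : ℕ)))]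
      congr 1
  have hwup : ∀ n : ℤ, (∀ t : ℕ, t ≤ r → w (n + (t : ℤ)) = 0) → w (n + (r : ℤ) + 1) = 0 := by
    intro n hzero
    obtain ⟨e, he⟩ := hup n
    have hkey : w (n + (r : ℤ) + 1) = ∑ i : Fin (r + 1), e i * w (n + ((i : ℕ) : ℤ)) := by
      simp only [hwdef]
      have l1 : ∀ j : Fin (r + 2), (-1 : ℝ) ^ (j : ℕ) * D (r + 1 - (j : ℕ)) 0 *
          a (n + (r : ℤ) + 1 + ((j : ℕ) : ℤ))
          = ∑ i : Fin (r + 1), e i * ((-1 : ℝ) ^ (j : ℕ) * D (r + 1 - (j : ℕ)) 0 *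
            a (n + ((i : ℕ) : ℤ) + ((j : ℕ) : ℤ))) := by
        intro j
        rw [he (j : ℕ) (by have := j.isLt; omega), Finset.mul_sum]
        exact Finset.sum_congr rfl (fun i _ => by ring)
      rw [Finset.sum_congr rfl (fun j _ => l1 j), Finset.sum_comm]
      refine Finset.sum_congr rfl (fun i _ => ?_)
      rw [Finset.mul_sum]
    rw [hkey]
    apply Finset.sum_eq_zero
    intro i _
    rw [hzero (i : ℕ) (by have := i.isLt; omega)]
    ring
  have hwdn : ∀ n : ℤ, (∀ t : ℕ, t ≤ r → w (n + 1 + (t : ℤ)) = 0) → w n = 0 := by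
    intro n hzero
    obtain ⟨f, hf⟩ := hdown n
    have hkey : w n = ∑ i : Fin (r + 1), f i * w (n + 1 + ((i : ℕ) : ℤ)) := by
      simp only [hwdef]
      have l1 : ∀ j : Fin (r + 2), (-1 : ℝ) ^ (j : ℕ) * D (r + 1 - (j : ℕ)) 0 *
          a (n + ((j : ℕ) : ℤ))
          = ∑ i : Fin (r + 1), f i * ((-1 : ℝ) ^ (j : ℕ) * D (r + 1 - (j : ℕ)) 0 *
            a (n + 1 + ((i : ℕ) : ℤ) + ((j : ℕ) : ℤ))) := by
        intro j
        rw [hf (j : ℕ) (by have := j.isLt; omega), Finset.mul_sum]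
        exact Finset.sum_congr rfl (fun i _ => by ring)
      rw [Finset.sum_congr rfl (fun j _ => l1 j), Finset.sum_comm]
      refine Finset.sum_congr rfl (fun i _ => ?_)
      rw [Finset.mul_sum]
    rw [hkey]
    apply Finset.sum_eq_zero
    intro i _
    rw [hzero (i : ℕ) (by have := i.isLt; omega)]
    ring
  have hSall : ∀ n : ℤ, ∀ t : ℕ, t ≤ r → w (n + (t : ℤ)) = 0 := by
    intro n
    induction n using Int.induction_on with
    | zero =>
        intro t ht
        rw [show ((0 : ℤ) + (t : ℤ)) = (t : ℤ) from by ring]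
        exact hw0 t ht
    | succ k ih =>
        intro t ht
        rcases Nat.lt_or_ge t r with hlt | hge
        · have := ih (t + 1) (by omega)
          rw [show ((k : ℤ) + ((t + 1 : ℕ) : ℤ)) = ((k : ℤ) + 1 + (t : ℤ)) from by push_cast; ring] at this
          exact this
        · have ht' : t = r := by omega
          rw [ht']
          have := hwup (k : ℤ) ih
          rw [show ((k : ℤ) + (r : ℤ) + 1) = ((k : ℤ) + 1 + (r : ℤ)) from by ring] at this
          exact this
    | pred k ih =>
        intro t ht
        rcases Nat.eq_zero_or_pos t with h0 | hpos'
        · subst h0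
          have hz := hwdn (-(k : ℤ) - 1) (by
            intro t' ht'
            have := ih t' ht'
            rw [show (-(k : ℤ) - 1 + 1 + (t' : ℤ)) = (-(k : ℤ) + (t' : ℤ)) from by ring]
            exact this)
          rw [show (-(k : ℤ) - 1 + ((0 : ℕ) : ℤ)) = (-(k : ℤ) - 1) from by norm_num]
          exact hz
        · have := ih (t - 1) (by omega)
          rw [show (-(k : ℤ) + ((t - 1 : ℕ) : ℤ)) = (-(k : ℤ) - 1 + (t : ℤ)) from by omega] at this
          exact this
  have hwzero : ∀ n : ℤ, w n = 0 := by
    intro n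
    have := hSall n 0 (by omega)
    rwa [show (n + ((0 : ℕ) : ℤ)) = n from by norm_num] at this
  refine ⟨fun m _ n n' => (hconst m n).trans (hconst m n').symm, hD0, hDr1, fun n => ?_⟩
  have hw := hwzero n
  simp only [hwdef] at hw
  rw [← Fin.sum_univ_eq_sum_range (fun m => (-1 : ℝ) ^ m * D (r + 1 - m) 0 * a (n + (m : ℤ))) (r + 2)]
  exact hw
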